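/- For 0 < p ≤ 2 and τ > 0, define φ(z) = (z² + τ²)^{p/2} and for a fixed z̄ define g(z) = (p/2)·(z̄² + τ²)^{(p−2)/2}·z² + φ(z̄) − (p/2)·(z̄² + τ²)^{(p−2)/2}·z̄². Then g is a quadratic tangent majorant of φ at z̄: g(z) ≥ φ(z) for all z ∈ ℝ, g(z̄) = φ(z̄), and g'(z̄) = φ'(z̄). -/

import Mathlib

/-- The quadratic g(z) = (p/2)(z̄²+τ²)^{(p−2)/2} z² + (z̄²+τ²)^{p/2} − (p/2)(z̄²+τ²)^{(p−2)/2} z̄²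
is a quadratic tangent majorant of φ(z) = (z²+τ²)^{p/2} at z̄, for 0 < p ≤ 2 and τ > 0. -/
theorem stmt_14 (p τ : ℝ) (hp0 : 0 < p) (hp2 : p ≤ 2) (hτ : 0 < τ) (zb : ℝ)
    (φ g : ℝ → ℝ)
    (hφ : ∀ z, φ z = (z ^ 2 + τ ^ 2) ^ (p / 2))
    (hg : ∀ z, g z = p / 2 * (zb ^ 2 + τ ^ 2) ^ ((p - 2) / 2) * z ^ 2 + φ zb -
        p / 2 * (zb ^ 2 + τ ^ 2) ^ ((p - 2) / 2) * zb ^ 2) :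
    (∀ z, φ z ≤ g z) ∧ g zb = φ zb ∧ deriv g zb = deriv φ zb := by
  set α := p / 2 with hα
  have hα0 : 0 < α := by positivity
  have hα1 : α ≤ 1 := by rw [hα]; linarith
  set s : ℝ := zb ^ 2 + τ ^ 2 with hs
  have hspos : 0 < s := by positivity
  refine ⟨?_, ?_, ?_⟩
  · intro z
    set t : ℝ := z ^ 2 + τ ^ 2 with ht
    have htpos : 0 < t := by positivity
    -- Bernoulli: (t/s)^α ≤ 1 + α (t/s - 1)
    have hb : (1 + (t / s - 1)) ^ α ≤ 1 + α * (t / s - 1) :=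
      rpow_one_add_le_one_add_mul_self (by
        have : 0 ≤ t / s := by positivity
        linarith) hα0.le hα1
    rw [add_sub_cancel] at hb
    have key : t ^ α ≤ s ^ α + α * s ^ (α - 1) * (t - s) := by
      have h1 : t ^ α = s ^ α * (t / s) ^ α := by
        rw [← Real.mul_rpow hspos.le (by positivity)]
        rw [mul_div_cancel₀ _ hspos.ne']
      have h2 : s ^ α * (1 + α * (t / s - 1)) = s ^ α + α * s ^ (α - 1) * (t - s) := by
        have hsa : s ^ (α - 1) = s ^ α / s := by
          rw [Real.rpow_sub hspos, Real.rpow_one]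
        rw [hsa]; field_simp
      calc t ^ α = s ^ α * (t / s) ^ α := h1
        _ ≤ s ^ α * (1 + α * (t / s - 1)) := by
            apply mul_le_mul_of_nonneg_left hb (by positivity)
        _ = s ^ α + α * s ^ (α - 1) * (t - s) := h2
    have hexp : (p - 2) / 2 = α - 1 := by rw [hα]; ring
    rw [hφ, hg, hφ, hexp, ← ht, ← hs]
    have h4 : α * s ^ (α - 1) * (t - s) =
        α * s ^ (α - 1) * z ^ 2 - α * s ^ (α - 1) * zb ^ 2 := by
      rw [ht, hs]; ring
    linarith
  · rw [hg]; ring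
  · have hexp : (p - 2) / 2 = α - 1 := by rw [hα]; ring
    have hgd : deriv g zb = 2 * (α * s ^ (α - 1)) * zb := by
      have : g = fun z => α * s ^ (α - 1) * z ^ 2 +
          (φ zb - α * s ^ (α - 1) * zb ^ 2) := by
        funext z; rw [hg, hexp]; ring
      have h1 := ((hasDerivAt_pow 2 zb).const_mul (α * s ^ (α - 1))).add_const
        (φ zb - α * s ^ (α - 1) * zb ^ 2)
      rw [this, h1.deriv]
      push_cast
      ring
    have hφd : HasDerivAt φ (α * s ^ (α - 1) * (2 * zb)) zb := by
      have hin : HasDerivAt (fun z : ℝ => z ^ 2 + τ ^ 2) (2 * zb) zb := by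
        simpa using (hasDerivAt_pow 2 zb).add_const (τ ^ 2)
      have hout : HasDerivAt (fun x : ℝ => x ^ α) (α * s ^ (α - 1)) s :=
        Real.hasDerivAt_rpow_const (Or.inl hspos.ne')
      have := hout.comp zb hin
      have heq : φ = (fun x : ℝ => x ^ α) ∘ (fun z : ℝ => z ^ 2 + τ ^ 2) := by
        funext z; simp [hφ, hα]
      rw [heq]
      simpa using this
    rw [hgd, hφd.deriv]; ring
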